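/- Let R be a real closed field, F ∈ {R, R(X), R(X,Y)}, d ∈ F* negative, K = F(√d), and D = diag(d₁,...,dₙ) ∈ GL(n,F). If there exists X ∈ GL(n,K) with X*X = D, then each dᵢ is positive and d₁⋯dₙ ∈ N(K*). (The converse also holds, using that every positive element of F is a value of every 2-Pfister form over F, by Pfister's theorem.) -/

import Mathlib

open Matrix

lemma isSumSq_mul_sq {F : Type*} [CommRing F] {S : F} (h : IsSumSq S) (b : F) :
    IsSumSq (S * (b * b)) := by
  induction h with
  | zero => simpa using IsSumSq.zero
  | @sq_add a S _ ih =>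
      have : (a * a + S) * (b * b) = (a * b) * (a * b) + S * (b * b) := by ring
      rw [this]
      exact IsSumSq.sq_add (a*b) ih

/-- forward implication: let `R` be a real closed field,
`F ∈ {R, R(X), R(X,Y)}`, `d ∈ F*` negative (`−d` a nonzero sum of squares, "positive"),
`K = F(√d)`, and `D = diag(d₁,…,dₙ) ∈ GL(n,F)`. If some `X ∈ GL(n,K)` satisfies
`X*X = D`, then each `dᵢ` is positive (a nonzero sum of squares) and
`d₁⋯dₙ ∈ N(K*)`. -/
theorem stmt16 (R : Type*) [Field R] [LinearOrder R] [IsStrictOrderedRing R]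
    (hRsq : ∀ x : R, 0 ≤ x → IsSquare x)
    (hRodd : ∀ p : Polynomial R, Odd p.natDegree → ∃ x, Polynomial.eval x p = 0)
    (F : Type*) [Field F]
    (hF : Nonempty (F ≃+* R) ∨ Nonempty (F ≃+* RatFunc R) ∨
      Nonempty (F ≃+* RatFunc (RatFunc R)))
    (K : Type*) [Field K] [Algebra F K]
    (σ : K ≃ₐ[F] K) (hσinv : ∀ x, σ (σ x) = x)
    (hfix : ∀ x : K, σ x = x ↔ ∃ y : F, algebraMap F K y = x)
    (d : F) (hd0 : d ≠ 0) (hdneg : IsSumSq (-d)) (hd : ¬ IsSquare d)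
    (s : K) (hs : s * s = algebraMap F K d) (hσs : σ s = -s)
    (hgen : ∀ x : K, ∃ a b : F, x = algebraMap F K a + algebraMap F K b * s)
    (n : ℕ) (dseq : Fin n → F) (hdnz : ∀ i, dseq i ≠ 0)
    (X : Matrix (Fin n) (Fin n) K) (hX : IsUnit X.det)
    (hXX : (X.map σ)ᵀ * X = Matrix.diagonal fun i => algebraMap F K (dseq i)) :
    (∀ i, IsSumSq (dseq i)) ∧
      ∃ z : K, z ≠ 0 ∧ σ z * z = algebraMap F K (∏ i, dseq i) := by
  have hinj : Function.Injective (algebraMap F K) := (algebraMap F K).injective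
  have hσalg : ∀ a : F, σ (algebraMap F K a) = algebraMap F K a := fun a =>
    (hfix _).mpr ⟨a, rfl⟩
  -- norm form: σ x * x = algebraMap (a² - d b²) when x = a + b s
  have hnorm : ∀ x : K, ∃ e : F, IsSumSq e ∧ σ x * x = algebraMap F K e := by
    intro x
    obtain ⟨a, b, hab⟩ := hgen x
    refine ⟨a * a + (-d) * (b * b), ?_, ?_⟩
    · exact IsSumSq.sq_add a (isSumSq_mul_sq hdneg b)
    · have hσx : σ x = algebraMap F K a - algebraMap F K b * s := by
        rw [hab]
        simp [map_add, _root_.map_mul, hσalg, hσs, mul_neg, sub_eq_add_neg]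
      rw [hσx, hab]
      have : (algebraMap F K a - algebraMap F K b * s) *
          (algebraMap F K a + algebraMap F K b * s)
          = algebraMap F K a * algebraMap F K a
            - algebraMap F K b * algebraMap F K b * (s * s) := by ring
      rw [this, hs]
      push_cast [map_add, _root_.map_mul, map_neg]
      ring
  constructor
  · intro i
    -- diagonal entries
    have hdiag : algebraMap F K (dseq i) = ∑ j, σ (X j i) * X j i := by
      have := congrFun (congrFun hXX i) i
      simp [Matrix.mul_apply, Matrix.diagonal_apply_eq, Matrix.transpose_apply,
        Matrix.map_apply] at this
      rw [← this]
    choose e he1 he2 using fun j => hnorm (X j i)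
    have : algebraMap F K (dseq i) = algebraMap F K (∑ j, e j) := by
      rw [hdiag, map_sum]
      exact Finset.sum_congr rfl fun j _ => he2 j
    have hde : dseq i = ∑ j, e j := hinj this
    rw [hde]
    exact Finset.sum_induction e IsSumSq (fun a b ha hb => ha.add hb) IsSumSq.zero
      (fun j _ => he1 j)
  · refine ⟨X.det, ?_, ?_⟩
    · exact hX.ne_zero
    · have hdet : ((X.map σ)ᵀ * X).det = σ X.det * X.det := by
        rw [Matrix.det_mul, Matrix.det_transpose]
        congr 1
        exact (RingHom.map_det (σ : K →+* K) X).symm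
      rw [← hdet, hXX, Matrix.det_diagonal, ← map_prod]
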